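/- Consider an oblivious agent on the path v₁,…,vₙ (n ≥ 2) whose behavior at every degree-2 node is given by a single fixed sequence a : ℕ → Fin 2 (the j-th exit port on the j-th visit to any internal node), started at vₙ. Then there exists a port labeling of the path (an assignment, for each internal node, of which physical neighbor corresponds to port 1 and which to port 2) such that if the agent ever reaches v₁, it makes at least (n−1)² edge traversals before its first visit to v₁. -/

import Mathlib

/-- One step of the oblivious agent on the path `v₁, …, vₙ` (vertices `1, …, n`).
The state is `(current vertex, visit counts)`.  At an internal node `v` the agent,
on its `k`-th visit, exits via port `a k`, which the labeling `L` maps to a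
physical neighbor; at the endpoints it moves to the unique neighbor.  Visit counts
are updated on departure. -/
def pathStep (n : ℕ) (a : ℕ → Fin 2) (L : ℕ → Fin 2 → ℕ)
    (s : ℕ × (ℕ → ℕ)) : ℕ × (ℕ → ℕ) :=
  let v := s.1
  let c := s.2
  let v' := if v = 1 then 2 else if v = n then n - 1 else L v (a (c v + 1))
  (v', Function.update c v (c v + 1))

/-- The walk of the oblivious agent on the path, started at vertex `n` (= `vₙ`). -/
def pathWalk (n : ℕ) (a : ℕ → Fin 2) (L : ℕ → Fin 2 → ℕ) : ℕ → ℕ × (ℕ → ℕ)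
  | 0 => (n, fun _ => 0)
  | t + 1 => pathStep n a L (pathWalk n a L t)

/-- A valid port labeling: at every internal node the two ports are assigned
bijectively to the two physical neighbors. -/
def ValidLabeling (n : ℕ) (L : ℕ → Fin 2 → ℕ) : Prop :=
  ∀ v, 1 < v → v < n →
    (L v 0 = v - 1 ∧ L v 1 = v + 1) ∨ (L v 0 = v + 1 ∧ L v 1 = v - 1)

namespace PLB
variable (a : ℕ → Fin 2)

def cnt (s : Fin 2) (k : ℕ) : ℕ := ((Finset.range k).filter (fun j => a (j+1) = s)).card
def ncnt (s : Fin 2) (k : ℕ) : ℕ := ((Finset.range k).filter (fun j => ¬ a (j+1) = s)).card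

lemma cnt_succ (s : Fin 2) (k : ℕ) :
    cnt a s (k+1) = cnt a s k + if a (k+1) = s then 1 else 0 := by
  unfold cnt
  by_cases h : a (k+1) = s <;>
    simp [Finset.range_add_one, Finset.filter_insert, h,
      Finset.card_insert_of_notMem (by simp : k ∉ Finset.range k)]

lemma ncnt_succ (s : Fin 2) (k : ℕ) :
    ncnt a s (k+1) = ncnt a s k + if a (k+1) = s then 0 else 1 := by
  unfold ncnt
  by_cases h : a (k+1) = s <;>
    simp [Finset.range_add_one, Finset.filter_insert, h,
      Finset.card_insert_of_notMem (by simp : k ∉ Finset.range k)]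

lemma cnt_mono (s : Fin 2) : Monotone (cnt a s) := by
  intro i j hij
  exact Finset.card_le_card (Finset.filter_subset_filter _ (by simpa using hij))

lemma ncnt_mono (s : Fin 2) : Monotone (ncnt a s) := by
  intro i j hij
  exact Finset.card_le_card (Finset.filter_subset_filter _ (by simpa using hij))

lemma cnt_add_ncnt (s : Fin 2) (k : ℕ) : cnt a s k + ncnt a s k = k := by
  unfold cnt ncnt
  rw [Finset.card_filter_add_card_filter_not]
  simp


/-- adversary's orientation at node `v`: the minority symbol of `a` on `[1, 2v-3]`. -/
def eps (v : ℕ) : Fin 2 := if cnt a 0 (2*v - 3) < v - 1 then 0 else 1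

lemma cnt_eps_lt (v : ℕ) (hv : 2 ≤ v) : cnt a (eps a v) (2*v - 3) < v - 1 := by
  unfold eps
  split
  · assumption
  · have h0 := cnt_add_ncnt a 0 (2*v-3)
    have h1 : ncnt a 0 (2*v-3) = cnt a 1 (2*v-3) := by
      unfold cnt ncnt
      congr 1
      apply Finset.filter_congr
      intro x _
      constructor
      · intro h; exact Fin.eq_one_of_ne_zero _ h
      · intro h; rw [h]; exact one_ne_zero
    omega

/-- key: if node `v`'s left-count reaches `v-1`, its right-count is at least `v-1`. -/
lemma ncnt_ge (v k : ℕ) (hv : 2 ≤ v) (h : v - 1 ≤ cnt a (eps a v) k) :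
    v - 1 ≤ ncnt a (eps a v) k := by
  have h1 := cnt_eps_lt a v hv
  have h2 : 2*v - 3 < k := by
    by_contra hc
    have := cnt_mono a (eps a v) (by omega : k ≤ 2*v-3)
    omega
  have h3 := ncnt_mono a (eps a v) (by omega : 2*v - 3 ≤ k)
  have h4 := cnt_add_ncnt a (eps a v) (2*v-3)
  omega


/-- the adversarial labeling: port `eps a v` leads left (toward `v₁`). -/
def lab (v : ℕ) (p : Fin 2) : ℕ := if p = eps a v then v - 1 else v + 1

lemma lab_valid (n : ℕ) : ValidLabeling n (lab a) := by
  intro v h1 h2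
  by_cases h : eps a v = 0
  · left; constructor <;> simp [lab, h]
  · right
    have h' : eps a v = 1 := Fin.eq_one_of_ne_zero _ h
    constructor <;> simp [lab, h']

/-- left-exit count of node `v` (for `2 ≤ v ≤ n`) after `k` departures. -/
def lcnt (n v k : ℕ) : ℕ := if v = n then k else cnt a (eps a v) k
/-- right-exit count of node `v` (for `1 ≤ v ≤ n-1`) after `k` departures. -/
def rcnt (v k : ℕ) : ℕ := if v = 1 then k else ncnt a (eps a v) k

lemma lcnt_zero (n v : ℕ) : lcnt a n v 0 = 0 := by
  unfold lcnt; split <;> simp [cnt]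

lemma rcnt_zero (v : ℕ) : rcnt a v 0 = 0 := by
  unfold rcnt; split <;> simp [ncnt]

lemma inv_all (n : ℕ) (hn : 2 ≤ n) : ∀ t,
    1 ≤ (pathWalk n a (lab a) t).1 ∧ (pathWalk n a (lab a) t).1 ≤ n ∧
    (Finset.Icc 1 n).sum (pathWalk n a (lab a) t).2 = t ∧
    (∀ v, 1 ≤ v → v + 1 ≤ n →
      lcnt a n (v+1) ((pathWalk n a (lab a) t).2 (v+1)) =
        rcnt a v ((pathWalk n a (lab a) t).2 v) +
          (if (pathWalk n a (lab a) t).1 ≤ v then 1 else 0)) := by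
  intro t
  induction t with
  | zero =>
    refine ⟨by simp [pathWalk]; omega, by simp [pathWalk], by simp [pathWalk], ?_⟩
    intro v h1 h2
    simp only [pathWalk, lcnt_zero, rcnt_zero]
    simp [show ¬ n ≤ v by omega]
  | succ t ih =>
    rcases hW : pathWalk n a (lab a) t with ⟨v₀, c⟩
    rw [hW] at ih
    obtain ⟨hp1, hpn, hsum, hflow⟩ := ih
    simp only at hp1 hpn hsum hflow
    have hcsum : (Finset.Icc 1 n).sum (Function.update c v₀ (c v₀ + 1)) = t + 1 := by
      have hmem : v₀ ∈ Finset.Icc 1 n := Finset.mem_Icc.mpr ⟨hp1, hpn⟩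
      rw [Finset.sum_update_of_mem hmem, Finset.sdiff_singleton_eq_erase]
      rw [← Finset.sum_erase_add _ _ hmem] at hsum
      omega
    by_cases h1 : v₀ = 1
    · -- endpoint 1 : move to 2
      have hstep : pathWalk n a (lab a) (t+1) = (2, Function.update c v₀ (c v₀ + 1)) := by
        show pathStep n a (lab a) (pathWalk n a (lab a) t) = _
        rw [hW]; simp [pathStep, h1]
      rw [hstep]
      refine ⟨by omega, hn, hcsum, ?_⟩
      intro v hv1 hvn
      have HF := hflow v hv1 hvn
      simp only
      by_cases hv : v = 1
      · subst hv
        subst h1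
        have e1 : Function.update c 1 (c 1 + 1) (1+1) = c (1+1) := by
          rw [Function.update_apply, if_neg (by omega)]
        have e2 : Function.update c 1 (c 1 + 1) 1 = c 1 + 1 := by
          rw [Function.update_apply, if_pos rfl]
        rw [e1, e2]
        have r1 : ∀ k, rcnt a 1 k = k := fun k => if_pos rfl
        rw [r1] at HF ⊢
        rw [if_neg (by omega : ¬ (2:ℕ) ≤ 1)]
        rw [if_pos (by omega : (1:ℕ) ≤ 1)] at HF
        omega
      · have e1 : Function.update c v₀ (c v₀ + 1) (v+1) = c (v+1) := by
          rw [Function.update_apply, if_neg (by omega)]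
        have e2 : Function.update c v₀ (c v₀ + 1) v = c v := by
          rw [Function.update_apply, if_neg (by omega)]
        rw [e1, e2, if_pos (by omega : 2 ≤ v)]
        rw [if_pos (by omega : v₀ ≤ v)] at HF
        exact HF
    · by_cases h2 : v₀ = n
      · -- endpoint n : move to n-1
        have hstep : pathWalk n a (lab a) (t+1) = (n-1, Function.update c v₀ (c v₀ + 1)) := by
          show pathStep n a (lab a) (pathWalk n a (lab a) t) = _
          rw [hW]; simp [pathStep, h2, show ¬ n = 1 by omega]
        rw [hstep]
        refine ⟨by omega, by omega, hcsum, ?_⟩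
        intro v hv1 hvn
        have HF := hflow v hv1 hvn
        simp only
        by_cases hv : v + 1 = n
        · have e1 : Function.update c v₀ (c v₀ + 1) (v+1) = c (v+1) + 1 := by
            rw [Function.update_apply, if_pos (by omega)]
            rw [show v₀ = v + 1 by omega]
          have e2 : Function.update c v₀ (c v₀ + 1) v = c v := by
            rw [Function.update_apply, if_neg (by omega)]
          rw [e1, e2]
          simp only [lcnt, if_pos hv] at HF ⊢
          rw [if_pos (by omega : n - 1 ≤ v)]
          rw [if_neg (by omega : ¬ v₀ ≤ v)] at HF
          omega
        · have e1 : Function.update c v₀ (c v₀ + 1) (v+1) = c (v+1) := by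
            rw [Function.update_apply, if_neg (by omega)]
          have e2 : Function.update c v₀ (c v₀ + 1) v = c v := by
            rw [Function.update_apply, if_neg (by omega)]
          rw [e1, e2, if_neg (by omega : ¬ n - 1 ≤ v)]
          rw [if_neg (by omega : ¬ v₀ ≤ v)] at HF
          exact HF
      · -- internal node
        have hstep : pathWalk n a (lab a) (t+1) =
            ((if a (c v₀ + 1) = eps a v₀ then v₀ - 1 else v₀ + 1),
              Function.update c v₀ (c v₀ + 1)) := by
          show pathStep n a (lab a) (pathWalk n a (lab a) t) = _
          rw [hW]; simp [pathStep, h1, h2, lab]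
        rw [hstep]
        by_cases hd : a (c v₀ + 1) = eps a v₀
        · -- move left, to v₀ - 1
          rw [if_pos hd]
          refine ⟨by omega, by omega, hcsum, ?_⟩
          intro v hv1 hvn
          have HF := hflow v hv1 hvn
          simp only
          by_cases hA : v + 1 = v₀
          · subst hA
            have e1 : Function.update c (v+1) (c (v+1) + 1) (v+1) = c (v+1) + 1 := by
              rw [Function.update_apply, if_pos rfl]
            have e2 : Function.update c (v+1) (c (v+1) + 1) v = c v := by
              rw [Function.update_apply, if_neg (by omega)]
            rw [e1, e2]
            simp only [lcnt, if_neg (show ¬ v + 1 = n from h2)] at HF ⊢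
            rw [cnt_succ, if_pos hd, if_pos (by omega : v + 1 - 1 ≤ v)]
            rw [if_neg (by omega : ¬ v + 1 ≤ v)] at HF
            omega
          · by_cases hB : v = v₀
            · subst hB
              have e1 : Function.update c v (c v + 1) (v+1) = c (v+1) := by
                rw [Function.update_apply, if_neg (by omega)]
              have e2 : Function.update c v (c v + 1) v = c v + 1 := by
                rw [Function.update_apply, if_pos rfl]
              rw [e1, e2]
              simp only [rcnt, if_neg (show ¬ v = 1 from h1)] at HF ⊢
              rw [ncnt_succ, if_pos hd, if_pos (by omega : v - 1 ≤ v)]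
              rw [if_pos (le_refl v)] at HF
              omega
            · have e1 : Function.update c v₀ (c v₀ + 1) (v+1) = c (v+1) := by
                rw [Function.update_apply, if_neg (by omega)]
              have e2 : Function.update c v₀ (c v₀ + 1) v = c v := by
                rw [Function.update_apply, if_neg (by omega)]
              rw [e1, e2]
              by_cases hlt : v < v₀
              · rw [if_neg (by omega : ¬ v₀ - 1 ≤ v)]
                rw [if_neg (by omega : ¬ v₀ ≤ v)] at HF
                exact HF
              · rw [if_pos (by omega : v₀ - 1 ≤ v)]
                rw [if_pos (by omega : v₀ ≤ v)] at HF
                exact HF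
        · -- move right, to v₀ + 1
          rw [if_neg hd]
          refine ⟨by omega, by omega, hcsum, ?_⟩
          intro v hv1 hvn
          have HF := hflow v hv1 hvn
          simp only
          by_cases hA : v + 1 = v₀
          · subst hA
            have e1 : Function.update c (v+1) (c (v+1) + 1) (v+1) = c (v+1) + 1 := by
              rw [Function.update_apply, if_pos rfl]
            have e2 : Function.update c (v+1) (c (v+1) + 1) v = c v := by
              rw [Function.update_apply, if_neg (by omega)]
            rw [e1, e2]
            simp only [lcnt, if_neg (show ¬ v + 1 = n from h2)] at HF ⊢
            rw [cnt_succ, if_neg hd, if_neg (by omega : ¬ v + 1 + 1 ≤ v)]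
            rw [if_neg (by omega : ¬ v + 1 ≤ v)] at HF
            omega
          · by_cases hB : v = v₀
            · subst hB
              have e1 : Function.update c v (c v + 1) (v+1) = c (v+1) := by
                rw [Function.update_apply, if_neg (by omega)]
              have e2 : Function.update c v (c v + 1) v = c v + 1 := by
                rw [Function.update_apply, if_pos rfl]
              rw [e1, e2]
              simp only [rcnt, if_neg (show ¬ v = 1 from h1)] at HF ⊢
              rw [ncnt_succ, if_neg hd, if_neg (by omega : ¬ v + 1 ≤ v)]
              rw [if_pos (le_refl v)] at HF
              omega
            · have e1 : Function.update c v₀ (c v₀ + 1) (v+1) = c (v+1) := by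
                rw [Function.update_apply, if_neg (by omega)]
              have e2 : Function.update c v₀ (c v₀ + 1) v = c v := by
                rw [Function.update_apply, if_neg (by omega)]
              rw [e1, e2]
              by_cases hlt : v < v₀
              · rw [if_neg (by omega : ¬ v₀ + 1 ≤ v)]
                rw [if_neg (by omega : ¬ v₀ ≤ v)] at HF
                exact HF
              · rw [if_pos (by omega : v₀ + 1 ≤ v)]
                rw [if_pos (by omega : v₀ ≤ v)] at HF
                exact HF

lemma sum_lb (f : ℕ → ℕ) : ∀ M, (∀ v, 2 ≤ v → v ≤ M + 1 → 2*(v-1) ≤ f v) →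
    M^2 + M ≤ ∑ v ∈ Finset.Icc 2 (M+1), f v := by
  intro M
  induction M with
  | zero => intro _; simp
  | succ M ih =>
    intro hf
    rw [Finset.sum_Icc_succ_top (by omega : 2 ≤ M + 1 + 1)]
    have h1 := ih (fun v hv hv' => hf v hv (by omega))
    have h2 : 2*(M+1) ≤ f (M+1+1) := by
      have := hf (M+1+1) (by omega) (by omega)
      simpa using this
    have h3 : (M+1)^2 + (M+1) = M^2 + M + 2*(M+1) := by ring
    omega

theorem main (n : ℕ) (hn : 2 ≤ n) :
    ∃ L : ℕ → Fin 2 → ℕ, ValidLabeling n L ∧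
      ∀ t, (pathWalk n a L t).1 = 1 → (n - 1) ^ 2 ≤ t := by
  refine ⟨lab a, lab_valid a n, ?_⟩
  intro t hpos
  obtain ⟨hp1, hpn, hsum, hflow⟩ := inv_all a n hn t
  set c := (pathWalk n a (lab a) t).2 with hc
  -- flow identities at a moment when the agent sits on vertex 1
  have hflow1 : ∀ v, 1 ≤ v → v + 1 ≤ n →
      lcnt a n (v+1) (c (v+1)) = rcnt a v (c v) + 1 := by
    intro v hv1 hvn
    have := hflow v hv1 hvn
    rwa [hpos, if_pos hv1] at this
  -- the left-exit counts grow along the path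
  have claimA : ∀ m, m + 2 ≤ n → m + 1 ≤ lcnt a n (m+2) (c (m+2)) := by
    intro m
    induction m with
    | zero =>
      intro h
      have := hflow1 1 (le_refl 1) hn
      norm_num at this ⊢
      omega
    | succ m ih =>
      intro h
      have h1 := ih (by omega)
      rw [show m + 2 = (m+1) + 1 by omega] at h1 ⊢
      have hne : ¬ (m + 1 + 1 = n) := by omega
      rw [lcnt, if_neg hne] at h1
      have h2 : (m+2) - 1 ≤ ncnt a (eps a (m+2)) (c (m+2)) := by
        apply ncnt_ge a (m+2) _ (by omega)
        have : (m+2) - 1 = m + 1 := by omega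
        rw [this]
        exact h1
      have h3 := hflow1 (m+2) (by omega) (by omega)
      rw [rcnt, if_neg (by omega : ¬ m + 2 = 1)] at h3
      rw [show m + 1 + 1 + 1 = m + 2 + 1 by omega]
      omega
  -- per-vertex lower bounds
  have hb_n : n - 1 ≤ c n := by
    have := claimA (n-2) (by omega)
    rw [show n - 2 + 2 = n by omega] at this
    rw [lcnt, if_pos rfl] at this
    omega
  have hb_mid : ∀ v, 2 ≤ v → v + 1 ≤ n → 2*(v-1) ≤ c v := by
    intro v hv2 hvn
    have h1 := claimA (v-2) (by omega)
    rw [show v - 2 + 2 = v by omega] at h1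
    rw [lcnt, if_neg (by omega : ¬ v = n)] at h1
    have h2 : v - 1 ≤ cnt a (eps a v) (c v) := by omega
    have h3 := ncnt_ge a v (c v) hv2 h2
    have h4 := cnt_add_ncnt a (eps a v) (c v)
    omega
  -- summation
  have hsub : ∑ v ∈ Finset.Icc 2 n, c v ≤ t := by
    rw [← hsum]
    apply Finset.sum_le_sum_of_subset
    apply Finset.Icc_subset_Icc_left
    omega
  have hsplit : ∑ v ∈ Finset.Icc 2 n, c v
      = (∑ v ∈ Finset.Icc 2 (n-1), c v) + c n := by
    have h := Finset.sum_Icc_succ_top (by omega : 2 ≤ (n-1) + 1) c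
    rw [show n - 1 + 1 = n by omega] at h
    exact h
  have hlow : (n-2)^2 + (n-2) ≤ ∑ v ∈ Finset.Icc 2 (n-1), c v := by
    have h := sum_lb c (n-2) (fun v hv hv' => hb_mid v hv (by omega))
    rwa [show n - 2 + 1 = n - 1 by omega] at h
  have harith : (n-1)^2 ≤ (n-2)^2 + (n-2) + (n-1) := by
    obtain ⟨m, rfl⟩ : ∃ m, n = m + 2 := ⟨n - 2, by omega⟩
    simp only [Nat.add_sub_cancel, show m + 2 - 1 = m + 1 by omega]
    nlinarith
  omega
end PLB

/-- For any oblivious agent on the path `v₁, …, vₙ` (given by its per-node exit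
sequence `a`), started at `vₙ`, there is a port labeling such that if the agent
ever reaches `v₁` it has made at least `(n-1)²` edge traversals before that first
visit: any time `t` at which the agent is at `v₁` satisfies `(n-1)² ≤ t`. -/
theorem path_lower_bound (n : ℕ) (hn : 2 ≤ n) (a : ℕ → Fin 2) :
    ∃ L : ℕ → Fin 2 → ℕ, ValidLabeling n L ∧
      ∀ t, (pathWalk n a L t).1 = 1 → (n - 1) ^ 2 ≤ t :=
  PLB.main a n hn
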